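/- arXiv:1704.02746 — 3 statements merged into one kernel-verified Lean document; each statement's English description precedes it below -/
import Mathlib

section
/- Let (G,+) be a locally compact Hausdorff abelian topological group with a Haar measure |·|, let E ⊆ G be a Haar-measurable set, let X = {0,1}^G carry the product topology (each factor {0,1} discrete), for g ∈ G let T_g : X → X be the shift (T_g x)(t) = x(t+g), and let χ ∈ X be the indicator function of E. Then for every continuous function φ : X → ℝ, the map G → ℝ, g ↦ φ(T_g χ), is Haar-measurable. -/
open MeasureTheory Filter Topology

/-- Let `(G,+)` be a locally compact Hausdorff abelian topological group with a Haar
measure `μ`, `E ⊆ G` a measurable set, `X = {0,1}^G` (encoded as `G → Bool`) with the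
product topology, `T_g : X → X` the shift `(T_g x)(t) = x (t + g)`, and `χ ∈ X` the
indicator function of `E`.  Then for every continuous `φ : X → ℝ`, the map
`g ↦ φ (T_g χ)` is measurable. -/
theorem measurable_eval_shift_indicator {G : Type*} [AddCommGroup G] [TopologicalSpace G]
    [IsTopologicalAddGroup G] [LocallyCompactSpace G] [T2Space G]
    [MeasurableSpace G] [BorelSpace G]
    (μ : Measure G) [μ.IsAddHaarMeasure]
    (E : Set G) (hE : MeasurableSet E)
    (χ : G → Bool) (hχ : ∀ t : G, χ t = true ↔ t ∈ E)
    (φ : (G → Bool) → ℝ) (hφ : Continuous φ) :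
    Measurable (fun g : G => φ (fun t => χ (t + g))) := by
  -- χ is measurable
  have hχmeas : Measurable χ := by
    apply measurable_to_countable'
    intro b
    cases b
    · have h : χ ⁻¹' {false} = Eᶜ := by
        ext t
        simp only [Set.mem_preimage, Set.mem_singleton_iff, Set.mem_compl_iff, ← hχ t,
          Bool.not_eq_true]
      rw [h]; exact hE.compl
    · have h : χ ⁻¹' {true} = E := by
        ext t; simp [Set.mem_preimage, hχ t]
      rw [h]; exact hE
  -- the shift map
  set s : G → (G → Bool) := fun g => fun t => χ (t + g) with hs
  -- coordinate evaluation functions as real-valued continuous maps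
  let e : G → C(G → Bool, ℝ) := fun t =>
    ⟨fun x => if x t then 1 else 0,
      (continuous_of_discreteTopology (f := fun b : Bool => if b then (1:ℝ) else 0)).comp
        (continuous_apply t)⟩
  -- the subalgebra generated by coordinate functions
  let A : Subalgebra ℝ C(G → Bool, ℝ) := Algebra.adjoin ℝ (Set.range e)
  have hA : A.SeparatesPoints := by
    intro x y hxy
    obtain ⟨t, ht⟩ := Function.ne_iff.mp hxy
    refine ⟨_, ⟨e t, Algebra.subset_adjoin ⟨t, rfl⟩, rfl⟩, ?_⟩
    simp only [e, ContinuousMap.coe_mk]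
    cases hx : x t <;> cases hy : y t <;> simp_all
  -- every element of A gives a measurable map
  have key : ∀ f ∈ A, Measurable (fun g : G => f (s g)) := by
    intro f hf
    induction hf using Algebra.adjoin_induction with
    | mem f hf =>
      obtain ⟨t, rfl⟩ := hf
      have h1 : Measurable fun g : G => χ (t + g) :=
        hχmeas.comp (measurable_const_add t)
      have : (fun g : G => (e t) (s g)) =
          fun g : G => if χ (t + g) then (1:ℝ) else 0 := rfl
      rw [this]
      exact Measurable.ite (h1 (MeasurableSet.singleton true)) measurable_const
        measurable_const
    | algebraMap r => simpa using measurable_const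
    | add f g _ _ hf hg => simpa [Pi.add_def] using hf.add hg
    | mul f g _ _ hf hg => simpa [Pi.mul_def] using hf.mul hg
  -- Stone–Weierstrass: φ is a uniform limit of elements of A
  have hmem : (⟨φ, hφ⟩ : C(G → Bool, ℝ)) ∈ closure (A : Set C(G → Bool, ℝ)) :=
    ContinuousMap.continuousMap_mem_subalgebra_closure_of_separatesPoints A hA _
  obtain ⟨u, hu_mem, hu_tendsto⟩ := mem_closure_iff_seq_limit.mp hmem
  -- pointwise convergence of the compositions
  refine measurable_of_tendsto_metrizable (f := fun n g => (u n) (s g))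
    (fun n => key _ (hu_mem n)) ?_
  rw [tendsto_pi_nhds]
  intro g
  have := (continuous_eval_const (s g)).continuousAt.tendsto.comp hu_tendsto
  exact this
end

section
/- Let (G,+) be a locally compact Hausdorff abelian topological group with a Haar measure |·|, F ⊆ G a compact subset, 𝓕 = (F_n)_{n=1}^∞ an F-Følner sequence in (G,+,|·|), and E ⊆ G a Haar-measurable set such that the limit lim_{n→∞} |E ∩ F_n| / |F_n| exists and equals D*_𝓕(E). Let X = {0,1}^G with the product topology, T_g the shift (T_g x)(t) = x(t+g), χ ∈ X the indicator of E, μ_n the Baire probability measure on X with μ_n(φ) = (1/|F_n|) ∫_{F_n} φ(T_g χ) dg, and [1]_e = {x ∈ X : x(e) = 1} where e is the identity of G. Then every weak-* cluster point μ of (μ_n)_{n=1}^∞ satisfies μ([1]_e) = D*_𝓕(E); in particular, if D*_𝓕(E) > 0 then μ([1]_e) > 0. -/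
open MeasureTheory Filter Topology

/-- The upper density of a set `A` corresponding to a sequence `F` of subsets of `G`,
with respect to the measure `μ`:  `D*_𝓕(A) = limsup_n |A ∩ F_n| / |F_n|`. -/
noncomputable def upperDensity {G : Type*} [MeasurableSpace G]
    (μ : Measure G) (F : ℕ → Set G) (A : Set G) : ℝ :=
  Filter.limsup (fun n => (μ (A ∩ F n)).toReal / (μ (F n)).toReal) Filter.atTop

/-- `F` is an `S`-Følner sequence in `(G, +, μ)`:  a sequence of compact subsets of
positive finite measure such that `|(g + F_n) ∆ F_n| / |F_n| → 0` for every `g ∈ S`. -/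
def IsFolnerSeqOn {G : Type*} [AddCommGroup G] [TopologicalSpace G] [MeasurableSpace G]
    (μ : Measure G) (S : Set G) (F : ℕ → Set G) : Prop :=
  (∀ n, IsCompact (F n)) ∧ (∀ n, 0 < μ (F n) ∧ μ (F n) < ⊤) ∧
    ∀ g ∈ S, Filter.Tendsto
      (fun n => (μ (symmDiff ((g + ·) '' F n) (F n))).toReal / (μ (F n)).toReal)
      Filter.atTop (nhds 0)

/-- Let `(G,+)` be a locally compact Hausdorff abelian topological group with Haar measure
`μ`, `F ⊆ G` compact, `𝓕 = (F_n)` an `F`-Følner sequence, and `E ⊆ G` measurable such that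
`lim_n |E ∩ F_n| / |F_n|` exists and equals `D*_𝓕(E)`.  With `X = {0,1}^G` (encoded as
`G → Bool`), `T_g` the shift, `χ` the indicator of `E`, `μ_n` the Baire probability measure
determined by `μ_n(φ) = (1/|F_n|) ∫_{F_n} φ(T_g χ) dg`, and `[1]_e = {x : x(e) = 1}`, every
weak-* cluster point `ν` of `(μ_n)` satisfies `ν([1]_e) = D*_𝓕(E)`; in particular if
`D*_𝓕(E) > 0` then `ν([1]_e) > 0`. -/
theorem cluster_point_cylinder_measure_eq_upperDensity {G : Type*} [AddCommGroup G]
    [TopologicalSpace G] [IsTopologicalAddGroup G] [LocallyCompactSpace G] [T2Space G]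
    [MeasurableSpace G] [BorelSpace G]
    (μ : Measure G) [μ.IsAddHaarMeasure]
    (F : Set G) (hF : IsCompact F)
    (𝓕 : ℕ → Set G) (h𝓕 : IsFolnerSeqOn μ F 𝓕)
    (E : Set G) (hE : MeasurableSet E)
    (hElim : Filter.Tendsto (fun n => (μ (E ∩ 𝓕 n)).toReal / (μ (𝓕 n)).toReal)
      Filter.atTop (nhds (upperDensity μ 𝓕 E)))
    (χ : G → Bool) (hχ : ∀ t : G, χ t = true ↔ t ∈ E)
    (μn : ℕ → Measure (G → Bool)) (hμnprob : ∀ n, IsProbabilityMeasure (μn n))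
    (hμn : ∀ n, ∀ φ : C(G → Bool, ℝ),
      ∫ x, φ x ∂(μn n) = (μ (𝓕 n)).toReal⁻¹ * ∫ g in 𝓕 n, φ (fun t => χ (t + g)) ∂μ)
    (ν : Measure (G → Bool)) (hνprob : IsProbabilityMeasure ν)
    (hcluster : MapClusterPt (fun φ : C(G → Bool, ℝ) => ∫ x, φ x ∂ν) Filter.atTop
      (fun n => fun φ : C(G → Bool, ℝ) => ∫ x, φ x ∂(μn n))) :
    (ν {x : G → Bool | x 0 = true}).toReal = upperDensity μ 𝓕 E ∧
      (0 < upperDensity μ 𝓕 E → 0 < ν {x : G → Bool | x 0 = true}) := by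
  classical
  set S : Set (G → Bool) := {x : G → Bool | x 0 = true} with hS
  have hSmeas : MeasurableSet S := by
    have h : S = (fun x : G → Bool => x 0) ⁻¹' {true} := rfl
    rw [h]; exact measurable_pi_apply 0 (MeasurableSet.singleton true)
  -- the continuous test function
  set φ : C(G → Bool, ℝ) := ⟨fun x => if x 0 = true then (1 : ℝ) else 0,
    by
      have h0 : Continuous fun x : G → Bool => x 0 := continuous_apply 0
      exact (continuous_of_discreteTopology
        (f := fun b : Bool => if b = true then (1 : ℝ) else 0)).comp h0⟩ with hφ
  have hφ_ind : ∀ x : G → Bool, φ x = S.indicator 1 x := by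
    intro x
    by_cases hx : x 0 = true
    · simp [hφ, hS, hx]
    · simp [hφ, hS, hx]
  -- integral against ν
  have hν_int : ∫ x, φ x ∂ν = (ν S).toReal := by
    rw [show (fun x => φ x) = S.indicator 1 from funext hφ_ind]
    exact integral_indicator_one hSmeas
  -- integral against μn
  have hμn_int : ∀ n, ∫ x, φ x ∂(μn n) = (μ (E ∩ 𝓕 n)).toReal / (μ (𝓕 n)).toReal := by
    intro n
    rw [hμn n φ]
    have hval : ∀ g : G, φ (fun t => χ (t + g)) = E.indicator 1 g := by
      intro g
      simp only [hφ, ContinuousMap.coe_mk, zero_add]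
      by_cases hg : g ∈ E
      · simp [(hχ g).mpr hg, Set.indicator_of_mem hg]
      · have h' : χ g ≠ true := fun h => hg ((hχ g).mp h)
        simp [h', Set.indicator_of_notMem hg]
    rw [show (fun g => φ (fun t => χ (t + g))) = E.indicator 1 from funext hval]
    rw [show ∫ g in 𝓕 n, E.indicator 1 g ∂μ = ((μ.restrict (𝓕 n)) E).toReal from
      integral_indicator_one hE]
    rw [Measure.restrict_apply hE, div_eq_inv_mul]
  -- pass to the cluster point via evaluation at φ
  have hev : MapClusterPt ((fun L : C(G → Bool, ℝ) → ℝ => L φ)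
      (fun ψ : C(G → Bool, ℝ) => ∫ x, ψ x ∂ν)) Filter.atTop
      ((fun L : C(G → Bool, ℝ) → ℝ => L φ) ∘
        (fun n => fun ψ : C(G → Bool, ℝ) => ∫ x, ψ x ∂(μn n))) :=
    hcluster.continuousAt_comp ((continuous_apply φ).continuousAt)
  have htend : Filter.Tendsto ((fun L : C(G → Bool, ℝ) → ℝ => L φ) ∘
      (fun n => fun ψ : C(G → Bool, ℝ) => ∫ x, ψ x ∂(μn n))) Filter.atTop
      (nhds (upperDensity μ 𝓕 E)) := by
    have : ((fun L : C(G → Bool, ℝ) → ℝ => L φ) ∘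
        (fun n => fun ψ : C(G → Bool, ℝ) => ∫ x, ψ x ∂(μn n)))
        = fun n => (μ (E ∩ 𝓕 n)).toReal / (μ (𝓕 n)).toReal := funext fun n => hμn_int n
    rw [this]; exact hElim
  have hmain : (ν S).toReal = upperDensity μ 𝓕 E := by
    have h1 : (nhds (∫ x, φ x ∂ν) ⊓ Filter.map ((fun L : C(G → Bool, ℝ) → ℝ => L φ) ∘
        (fun n => fun ψ : C(G → Bool, ℝ) => ∫ x, ψ x ∂(μn n))) Filter.atTop).NeBot := hev
    have hne : (nhds (∫ x, φ x ∂ν) ⊓ nhds (upperDensity μ 𝓕 E)).NeBot :=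
      Filter.neBot_of_le (hf := h1) (inf_le_inf_left _ htend)
    exact hν_int ▸ eq_of_nhds_neBot hne
  refine ⟨hmain, fun hpos => ?_⟩
  rw [pos_iff_ne_zero]
  intro h0
  rw [h0] at hmain
  simp at hmain
  rw [← hmain] at hpos
  exact lt_irrefl 0 hpos
end

section
/- Let (G,+) be a locally compact Hausdorff abelian topological group with a Haar measure |·|, F ⊆ G a compact subset, 𝓕 = (F_n)_{n=1}^∞ an F-Følner sequence in (G,+,|·|), and E ⊆ G a Haar-measurable set. Let X = {0,1}^G with the product topology, T_g the shift (T_g x)(t) = x(t+g), χ ∈ X the indicator of E, and μ_n the Baire probability measure on X with μ_n(φ) = (1/|F_n|) ∫_{F_n} φ(T_g χ) dg. Fix g_1, …, g_l ∈ G and d ∈ ℤ, and set U = {x ∈ X : x(e) = 1 and x(d·g_i) = 1 for i = 1,…,l} (a clopen subset of X) and A = {u ∈ E : u + d·g_i ∈ E for i = 1,…,l}. Then every weak-* cluster point μ of (μ_n)_{n=1}^∞ satisfies μ(U) ≤ D*_𝓕(A); in particular, if μ(U) > 0 then D*_𝓕(A) > 0. -/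
open MeasureTheory Filter Topology

/-- Let `(G,+)` be a locally compact Hausdorff abelian topological group with Haar measure
`μ`, `F ⊆ G` compact, `𝓕 = (F_n)` an `F`-Følner sequence, `E ⊆ G` measurable.  With
`X = {0,1}^G` (encoded as `G → Bool`), `T_g` the shift, `χ` the indicator of `E`, and `μ_n`
the Baire probability measure determined by `μ_n(φ) = (1/|F_n|) ∫_{F_n} φ(T_g χ) dg`:
fixing `g_1, …, g_l ∈ G` and `d ∈ ℤ`, with
`U = {x : x(e) = 1 and x(d·g_i) = 1 for all i}` and `A = {u ∈ E : u + d·g_i ∈ E for all i}`,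
every weak-* cluster point `ν` of `(μ_n)` satisfies `ν(U) ≤ D*_𝓕(A)`; in particular if
`ν(U) > 0` then `D*_𝓕(A) > 0`. -/
theorem cluster_point_measure_le_upperDensity {G : Type*} [AddCommGroup G]
    [TopologicalSpace G] [IsTopologicalAddGroup G] [LocallyCompactSpace G] [T2Space G]
    [MeasurableSpace G] [BorelSpace G]
    (μ : Measure G) [μ.IsAddHaarMeasure]
    (F : Set G) (hF : IsCompact F)
    (𝓕 : ℕ → Set G) (h𝓕 : IsFolnerSeqOn μ F 𝓕)
    (E : Set G) (hE : MeasurableSet E)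
    (χ : G → Bool) (hχ : ∀ t : G, χ t = true ↔ t ∈ E)
    (μn : ℕ → Measure (G → Bool)) (hμnprob : ∀ n, IsProbabilityMeasure (μn n))
    (hμn : ∀ n, ∀ φ : C(G → Bool, ℝ),
      ∫ x, φ x ∂(μn n) = (μ (𝓕 n)).toReal⁻¹ * ∫ g in 𝓕 n, φ (fun t => χ (t + g)) ∂μ)
    (ν : Measure (G → Bool)) (hνprob : IsProbabilityMeasure ν)
    (hcluster : MapClusterPt (fun φ : C(G → Bool, ℝ) => ∫ x, φ x ∂ν) Filter.atTop
      (fun n => fun φ : C(G → Bool, ℝ) => ∫ x, φ x ∂(μn n)))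
    (l : ℕ) (g : Fin l → G) (d : ℤ)
    (U : Set (G → Bool))
    (hU : U = {x : G → Bool | x 0 = true ∧ ∀ i : Fin l, x (d • g i) = true})
    (A : Set G) (hA : A = {u ∈ E | ∀ i : Fin l, u + d • g i ∈ E}) :
    (ν U).toReal ≤ upperDensity μ 𝓕 A ∧ (0 < ν U → 0 < upperDensity μ 𝓕 A) := by
  classical
  obtain ⟨hcpt, hposfin, hfol⟩ := h𝓕
  -- U is measurable
  have hUmeas : MeasurableSet U := by
    rw [hU]
    have : {x : G → Bool | x 0 = true ∧ ∀ i : Fin l, x (d • g i) = true}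
        = ((fun x : G → Bool => x 0) ⁻¹' {true}) ∩
          ⋂ i : Fin l, ((fun x : G → Bool => x (d • g i)) ⁻¹' {true}) := by
      ext x; simp [Set.mem_iInter]
    rw [this]
    exact ((measurable_pi_apply 0) (measurableSet_singleton true)).inter
      (MeasurableSet.iInter fun i =>
        (measurable_pi_apply _) (measurableSet_singleton true))
  -- A is measurable
  have hAmeas : MeasurableSet A := by
    rw [hA]
    have : {u ∈ E | ∀ i : Fin l, u + d • g i ∈ E}
        = E ∩ ⋂ i : Fin l, ((fun u : G => u + d • g i) ⁻¹' E) := by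
      ext u; simp [Set.mem_iInter]
    rw [this]
    exact hE.inter (MeasurableSet.iInter fun i => (measurable_add_const _) hE)
  -- the continuous test function: indicator of U
  have hcontf : Continuous (fun x : G → Bool =>
      (if x 0 = true then (1:ℝ) else 0) *
        ∏ i : Fin l, (if x (d • g i) = true then (1:ℝ) else 0)) := by
    refine Continuous.mul ?_ (continuous_finset_prod _ fun i _ => ?_)
    · exact (continuous_of_discreteTopology
        (f := fun b : Bool => if b = true then (1:ℝ) else 0)).comp (continuous_apply 0)
    · exact (continuous_of_discreteTopology
        (f := fun b : Bool => if b = true then (1:ℝ) else 0)).comp (continuous_apply _)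
  set φ : C(G → Bool, ℝ) := ⟨_, hcontf⟩ with hφ
  have hmem : ∀ x : G → Bool, φ x = if x ∈ U then (1:ℝ) else 0 := by
    intro x
    by_cases hx : x ∈ U
    · rw [if_pos hx]
      rw [hU] at hx
      simp [hφ, hx.1, fun i => hx.2 i]
    · rw [if_neg hx]
      rw [hU] at hx
      simp only [Set.mem_setOf_eq, not_and, not_forall] at hx
      by_cases h0 : x 0 = true
      · obtain ⟨i, hi⟩ := hx h0
        simp [hφ, Finset.prod_eq_zero (Finset.mem_univ i), hi]
      · simp [hφ, h0]
  have hmemU : ∀ g' : G, (fun t => χ (t + g')) ∈ U ↔ g' ∈ A := by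
    intro g'
    rw [hU, hA]
    simp only [Set.mem_setOf_eq, Set.mem_sep_iff, hχ, zero_add]
    refine and_congr Iff.rfl (forall_congr' fun i => ?_)
    rw [add_comm]
  have hshift : ∀ g' : G, φ (fun t => χ (t + g')) = Set.indicator A (fun _ => (1:ℝ)) g' := by
    intro g'
    rw [hmem]
    by_cases hg : g' ∈ A
    · rw [if_pos ((hmemU g').2 hg), Set.indicator_of_mem hg]
    · rw [if_neg (fun h => hg ((hmemU g').1 h)), Set.indicator_of_notMem hg]
  -- integral against μn
  have hint : ∀ n, ∫ x, φ x ∂(μn n) = (μ (A ∩ 𝓕 n)).toReal / (μ (𝓕 n)).toReal := by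
    intro n
    rw [hμn n φ]
    have : (∫ g' in 𝓕 n, φ (fun t => χ (t + g')) ∂μ)
        = ∫ g' in 𝓕 n, Set.indicator A (fun _ => (1:ℝ)) g' ∂μ := by
      exact integral_congr_ae (Filter.Eventually.of_forall fun g' => hshift g')
    rw [this, setIntegral_indicator hAmeas, setIntegral_const, smul_eq_mul, mul_one,
      Set.inter_comm, inv_mul_eq_div, measureReal_def]
  -- integral against ν
  have hνint : ∫ x, φ x ∂ν = (ν U).toReal := by
    have h1 : ∫ x, φ x ∂ν = ∫ x, Set.indicator U (fun _ => (1:ℝ)) x ∂ν := by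
      refine integral_congr_ae (Filter.Eventually.of_forall fun x => ?_)
      rw [hmem]
      by_cases hx : x ∈ U
      · rw [if_pos hx, Set.indicator_of_mem hx]
      · rw [if_neg hx, Set.indicator_of_notMem hx]
    rw [h1, integral_indicator_const (1:ℝ) hUmeas, smul_eq_mul, mul_one, measureReal_def]
  -- cluster point of the real sequence
  have hcl : MapClusterPt ((ν U).toReal) atTop
      (fun n => (μ (A ∩ 𝓕 n)).toReal / (μ (𝓕 n)).toReal) := by
    have h2 := hcluster.continuousAt_comp
      (f := fun ψ : C(G → Bool, ℝ) → ℝ => ψ φ) (continuous_apply φ).continuousAt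
    change MapClusterPt (∫ x, φ x ∂ν) atTop _ at h2
    rw [hνint] at h2
    have h3 : ((fun ψ : C(G → Bool, ℝ) → ℝ => ψ φ) ∘ fun n => fun ψ : C(G → Bool, ℝ) => ∫ x, ψ x ∂(μn n))
        = fun n => (μ (A ∩ 𝓕 n)).toReal / (μ (𝓕 n)).toReal := funext hint
    rwa [h3] at h2
  -- each ratio is at most 1
  have hbound : ∀ n, (μ (A ∩ 𝓕 n)).toReal / (μ (𝓕 n)).toReal ≤ 1 := by
    intro n
    apply div_le_one_of_le₀ _ ENNReal.toReal_nonneg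
    exact ENNReal.toReal_mono (hposfin n).2.ne
      (measure_mono Set.inter_subset_right)
  have hbdd : Filter.IsBoundedUnder (· ≤ ·) Filter.atTop
      (fun n => (μ (A ∩ 𝓕 n)).toReal / (μ (𝓕 n)).toReal) :=
    Filter.isBoundedUnder_of ⟨1, hbound⟩
  have hmain : (ν U).toReal ≤ upperDensity μ 𝓕 A := by
    rw [upperDensity]
    refine le_of_forall_pos_le_add fun ε hε => ?_
    have hfreq : ∃ᶠ n in Filter.atTop,
        (ν U).toReal - ε ≤ (μ (A ∩ 𝓕 n)).toReal / (μ (𝓕 n)).toReal := by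
      have := mapClusterPt_iff_frequently.mp hcl (Set.Ioi ((ν U).toReal - ε))
        (Ioi_mem_nhds (by linarith))
      exact this.mono fun n hn => le_of_lt hn
    have := le_limsup_of_frequently_le hfreq hbdd
    linarith
  refine ⟨hmain, fun hpos => ?_⟩
  have : 0 < (ν U).toReal :=
    ENNReal.toReal_pos hpos.ne' (measure_ne_top ν U)
  linarith
end
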